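/- Let n ≥ 2, a_0, …, a_n real, a ∈ (−1,1), r > 0 with 2rn² ≤ 1. Let u_k(a) be the Clenshaw sequence of p at a, and let M > 0 satisfy |u_k(a)| ≤ M for 1 ≤ k ≤ n. Define e_n = 0, f_n = 0, and for k = n−1 down to 1: f_k = 2r·|u_{k+1}(a)| + 2r·e_{k+1} + f_{k+1} and e_k = min(e_{k+1} + f_k, f_k/√(1−a²)). Then for all k with 1 ≤ k ≤ n−1: f_k ≤ 2Mr·(2(n−k) − 1) and e_k ≤ 2M(n−k)²·r. -/
import Mathlib


open Finset

/-- Intermediate bounds in the forward error analysis of the ball Clenshaw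
algorithm, case `2rn² ≤ 1`: `fₖ ≤ 2Mr(2(n−k)−1)` and `eₖ ≤ 2M(n−k)²r`. -/
theorem ball_clenshaw_forward_intermediate_bounds_small (n : ℕ) (hn : 2 ≤ n) (a : ℕ → ℝ)
    (c : ℝ) (hc : c ∈ Set.Ioo (-1 : ℝ) 1) (r : ℝ) (hr : 0 < r)
    (hrn : 2 * r * (n : ℝ) ^ 2 ≤ 1)
    (u : ℕ → ℝ) (hun1 : u (n + 1) = 0) (hun : u n = a n)
    (hurec : ∀ k, 1 ≤ k → k ≤ n - 1 → u k = 2 * c * u (k + 1) - u (k + 2) + a k)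
    (M : ℝ) (hM : 0 < M) (hMu : ∀ k, 1 ≤ k → k ≤ n → |u k| ≤ M)
    (e f : ℕ → ℝ) (hen : e n = 0) (hfn : f n = 0)
    (href : ∀ k, 1 ≤ k → k ≤ n - 1 →
      f k = 2 * r * |u (k + 1)| + 2 * r * e (k + 1) + f (k + 1) ∧
      e k = min (e (k + 1) + f k) (f k / Real.sqrt (1 - c ^ 2))) :
    ∀ k, 1 ≤ k → k ≤ n - 1 →
      f k ≤ 2 * M * r * (2 * ((n : ℝ) - (k : ℝ)) - 1) ∧
      e k ≤ 2 * M * ((n : ℝ) - (k : ℝ)) ^ 2 * r := by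

  have main : ∀ j, ∀ k, 1 ≤ k → k ≤ n - 1 → n - 1 - k = j →
      f k ≤ 2 * M * r * (2 * ((n : ℝ) - (k : ℝ)) - 1) ∧
      e k ≤ 2 * M * ((n : ℝ) - (k : ℝ)) ^ 2 * r := by
    intro j
    induction j with
    | zero =>
      intro k hk1 hk2 hj
      have hkn : k = n - 1 := by omega
      subst hkn
      obtain ⟨hf, he⟩ := href (n - 1) hk1 hk2
      have h1 : (n - 1 : ℕ) + 1 = n := by omega
      rw [h1] at hf he
      rw [hen, hfn] at hf
      have hM1 : |u n| ≤ M := hMu n (by omega) le_rfl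
      have hcast : ((n - 1 : ℕ) : ℝ) = (n : ℝ) - 1 := by
        have : 1 ≤ n := by omega
        push_cast [this]; ring
      rw [hcast]
      refine ⟨by rw [hf]; nlinarith, ?_⟩
      calc e (n - 1) ≤ e n + f (n - 1) := by rw [he]; exact min_le_left _ _
        _ ≤ 2 * M * ((n:ℝ) - ((n:ℝ) - 1)) ^ 2 * r := by rw [hen, hf]; nlinarith
    | succ j ih =>
      intro k hk1 hk2 hj
      have hk2' : k + 1 ≤ n - 1 := by omega
      obtain ⟨ihf, ihe⟩ := ih (k + 1) (by omega) hk2' (by omega)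
      obtain ⟨hf, he⟩ := href k hk1 hk2
      have hM1 : |u (k + 1)| ≤ M := hMu (k + 1) (by omega) (by omega)
      have hcast : ((k + 1 : ℕ) : ℝ) = (k : ℝ) + 1 := by push_cast; ring
      rw [hcast] at ihf ihe
      obtain ⟨x, hx⟩ : ∃ x : ℝ, x = (n : ℝ) - (k : ℝ) - 1 := ⟨_, rfl⟩
      have hx1 : 1 ≤ x := by
        have : (k : ℝ) + 2 ≤ (n : ℝ) := by exact_mod_cast Nat.cast_le.mpr (by omega : k + 2 ≤ n)
        simp [hx]; linarith
      have hxn : x ≤ (n : ℝ) := by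
        have : (0 : ℝ) ≤ (k : ℝ) := Nat.cast_nonneg k
        simp [hx]; linarith
      have hrx : r * x ^ 2 ≤ 1 / 2 := by nlinarith
      have habs : 0 ≤ |u (k + 1)| := abs_nonneg _
      have h1 : (n : ℝ) - ((k : ℝ) + 1) = x := by rw [hx]; ring
      have hnk : (n : ℝ) - (k : ℝ) = x + 1 := by rw [hx]; ring
      rw [h1] at ihf ihe
      have key : 4 * M * r * (r * x ^ 2) ≤ 4 * M * r * (1 / 2) :=
        mul_le_mul_of_nonneg_left hrx (by positivity)
      have hre : 2 * r * e (k + 1) ≤ 2 * r * (2 * M * x ^ 2 * r) :=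
        mul_le_mul_of_nonneg_left ihe (by positivity)
      have hru : 2 * r * |u (k + 1)| ≤ 2 * r * M :=
        mul_le_mul_of_nonneg_left hM1 (by positivity)
      have hfk : f k ≤ 2 * M * r * (2 * ((n : ℝ) - (k : ℝ)) - 1) := by
        rw [hf, hnk]
        have hring : 2 * r * M + 2 * r * (2 * M * x ^ 2 * r) + 2 * M * r * (2 * x - 1)
            = 2 * M * r * (2 * (x + 1) - 1) + (4 * M * r * (r * x ^ 2) - 4 * M * r * (1 / 2)) := by
          ring
        linarith [key, hre, hru, ihf]
      refine ⟨hfk, ?_⟩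
      calc e k ≤ e (k + 1) + f k := by rw [he]; exact min_le_left _ _
        _ ≤ 2 * M * ((n:ℝ) - (k:ℝ)) ^ 2 * r := by
            rw [hnk] at hfk ⊢
            have hring : 2 * M * x ^ 2 * r + 2 * M * r * (2 * (x + 1) - 1)
                = 2 * M * (x + 1) ^ 2 * r := by ring
            linarith [ihe, hfk]
  intro k hk1 hk2
  exact main (n - 1 - k) k hk1 hk2 rfl
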